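/- Let M be an invertible 3×3 real matrix with det M > 0, and let u, v ∈ ℝ³ be orthonormal vectors with n = u ×₃ v. Then ‖(M.mulVec u) ×₃ (M.mulVec v)‖ = (det M) · ‖((M⁻¹)ᵀ).mulVec n‖. -/
import Mathlib


open Matrix

/-- The Euclidean norm of a vector in `Fin 3 → ℝ`. -/
noncomputable def euclNorm3 (w : Fin 3 → ℝ) : ℝ := Real.sqrt (∑ i, w i ^ 2)

lemma euclNorm3_smul (c : ℝ) (w : Fin 3 → ℝ) :
    euclNorm3 (c • w) = |c| * euclNorm3 w := by
  unfold euclNorm3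
  have : ∑ i, (c • w) i ^ 2 = c ^ 2 * ∑ i, w i ^ 2 := by
    simp [Finset.mul_sum, mul_pow]
  rw [this, Real.sqrt_mul (sq_nonneg c), Real.sqrt_sq_eq_abs]

theorem nanson_area_factor (M : Matrix (Fin 3) (Fin 3) ℝ) (u v n : Fin 3 → ℝ)
    (hM : IsUnit M.det) (hdet : 0 < M.det)
    (hu : euclNorm3 u = 1) (hv : euclNorm3 v = 1) (huv : ∑ i, u i * v i = 0)
    (hn : n = crossProduct u v) :
    euclNorm3 (crossProduct (M.mulVec u) (M.mulVec v)) =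
      M.det * euclNorm3 ((M⁻¹)ᵀ.mulVec n) := by
  have key : (crossProduct (M.mulVec u) (M.mulVec v) : Fin 3 → ℝ)
      = M.adjugateᵀ.mulVec (crossProduct u v) := by
    funext i
    fin_cases i <;>
      simp [crossProduct, mulVec, dotProduct, Fin.sum_univ_three,
        Matrix.adjugate_fin_three, Matrix.transpose_apply] <;> ring
  have hMinv : (M⁻¹)ᵀ = M.det⁻¹ • M.adjugateᵀ := by
    rw [Matrix.inv_def, Matrix.transpose_smul]
    rw [Ring.inverse_eq_inv]
  rw [key, hn, hMinv, Matrix.smul_mulVec, euclNorm3_smul,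
    abs_of_pos (inv_pos.mpr hdet)]
  field_simp
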